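/- arXiv:1102.0717 — 3 statements merged into one kernel-verified Lean document; each statement's English description precedes it below -/
import Mathlib

section
/- Let G(X) be the formal power series with G(X)^2 = G(X) + X and constant term 1. For every positive integer d and every integer k ≥ 0, the coefficient of X^k in G(X)^{2(d+k)} equals C(k+2d−1, 2d−1)·(d+k)/d. -/
noncomputable def bb (m : ℤ) (k : ℕ) : ℚ :=
  (∏ i ∈ Finset.range k, ((m : ℚ) - i)) / (k.factorial : ℚ)

lemma bb_zero (m : ℤ) : bb m 0 = 1 := by simp [bb]

lemma bb_pascal (m : ℤ) (k : ℕ) : bb (m + 1) (k + 1) = bb m k + bb m (k + 1) := by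
  have h1 : ∏ i ∈ Finset.range (k+1), (((m+1 : ℤ) : ℚ) - i)
      = ((m : ℚ) + 1) * ∏ i ∈ Finset.range k, ((m : ℚ) - i) := by
    rw [Finset.prod_range_succ']
    push_cast
    simp only [add_sub_add_right_eq_sub]
    ring_nf
  have h2 : ∏ i ∈ Finset.range (k+1), ((m : ℚ) - i)
      = (∏ i ∈ Finset.range k, ((m : ℚ) - i)) * ((m : ℚ) - k) := Finset.prod_range_succ _ _
  have hf : ((k+1).factorial : ℚ) = (k+1) * (k.factorial : ℚ) := by
    rw [Nat.factorial_succ]; push_cast; ring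
  have hk0 : (k.factorial : ℚ) ≠ 0 := Nat.cast_ne_zero.mpr k.factorial_ne_zero
  have hk1 : ((k : ℚ) + 1) ≠ 0 := by positivity
  unfold bb
  rw [h1, h2, hf]
  field_simp
  ring

lemma bb_natCast : ∀ (m k : ℕ), bb (m : ℤ) k = (m.choose k : ℚ)
  | m, 0 => by simp [bb]
  | 0, (k+1) => by
      simp [bb, Finset.prod_range_succ']
  | (m+1), (k+1) => by
      rw [show (((m+1 : ℕ)) : ℤ) = (m : ℤ) + 1 by push_cast; ring, bb_pascal,
        bb_natCast m k, bb_natCast m (k+1), Nat.choose_succ_succ]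
      push_cast; ring

lemma bb_neg : ∀ (k j : ℕ), bb (-(j : ℤ) - 1) k = (-1) ^ k * ((j + k).choose k : ℚ)
  | 0, j => by simp [bb]
  | (k+1), 0 => by
      have hp := bb_pascal (-1 : ℤ) k
      norm_num at hp
      have h0 : bb (0 : ℤ) (k+1) = 0 := by
        rw [show ((0:ℤ)) = ((0:ℕ) : ℤ) by norm_num, bb_natCast]
        simp
      have hk := bb_neg k 0
      norm_num at hk
      rw [show (-((0:ℕ) : ℤ) - 1) = -1 by norm_num]
      have : bb (-1 : ℤ) (k+1) = - bb (-1 : ℤ) k := by linarith [hp, h0.symm ▸ hp]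
      rw [this, hk]
      simp [pow_succ]
  | (k+1), (j+1) => by
      have hp := bb_pascal (-(j+1 : ℤ) - 1) k
      have e : (-(j+1 : ℤ) - 1) + 1 = -(j : ℤ) - 1 := by ring
      rw [e] at hp
      have h1 := bb_neg (k+1) j
      have h2 := bb_neg k (j+1)
      have e2 : (-((j+1 : ℕ)) - 1 : ℤ) = -(j+1 : ℤ) - 1 := by push_cast; ring
      rw [e2]
      have : bb (-(j+1 : ℤ) - 1) (k+1) = bb (-(j:ℤ) - 1) (k+1) - bb (-(j+1:ℤ) - 1) k := by
        rw [e2] at h2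
        linarith
      rw [this, h1]
      rw [e2] at h2
      rw [h2]
      have hc : (j + 1 + (k+1)).choose (k+1) = (j + (k+1)).choose (k+1) + ((j+1) + k).choose k := by
        rw [show j + 1 + (k+1) = (j + (k+1)) + 1 by ring, Nat.choose_succ_succ',
          show j + (k+1) = j + 1 + k by omega]
        exact Nat.add_comm _ _
      rw [hc]
      push_cast
      ring

open PowerSeries

noncomputable def gg : ℕ → ℚ
  | 0 => 1
  | (k+1) => (-1) ^ k * (catalan k : ℚ)

noncomputable def Gc : PowerSeries ℚ := PowerSeries.mk gg

lemma hGc_sq : Gc ^ 2 = Gc + PowerSeries.X := by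
  ext n
  rw [pow_two, coeff_mul,
    Finset.Nat.sum_antidiagonal_eq_sum_range_succ (fun a b => (coeff a Gc) * (coeff b Gc))]
  simp only [Gc, coeff_mk]
  match n with
  | 0 => simp [gg]
  | 1 => simp [gg, Finset.sum_range_succ]
  | (m+2) =>
    rw [Finset.sum_range_succ', Finset.sum_range_succ]
    have hterm : ∀ i ∈ Finset.range (m+1), gg (i+1) * gg (m + 2 - (i+1))
        = (-1) ^ m * ((catalan i : ℚ) * (catalan (m - i) : ℚ)) := by
      intro i hi
      rw [Finset.mem_range] at hi
      rw [show m + 2 - (i+1) = (m - i) + 1 by omega]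
      show ((-1:ℚ) ^ i * (catalan i : ℚ)) * ((-1) ^ (m-i) * (catalan (m-i) : ℚ)) = _
      rw [show ((-1:ℚ))^m = (-1)^i * (-1)^(m-i) by rw [← pow_add]; congr 1; omega]
      ring
    rw [Finset.sum_congr rfl hterm, ← Finset.mul_sum]
    have hcat : ((catalan (m+1) : ℚ)) = ∑ i ∈ Finset.range (m+1),
        (catalan i : ℚ) * (catalan (m-i) : ℚ) := by
      rw [catalan_succ, Fin.sum_univ_eq_sum_range (fun j => catalan j * catalan (m - j))]
      push_cast
      rfl
    rw [← hcat, show m + 2 - (m+1+1) = 0 by omega, Nat.sub_zero]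
    have hX2 : (coeff (m+2)) (mk gg + PowerSeries.X) = gg (m+2) := by
      simp [coeff_mk, coeff_X]
    rw [hX2]
    simp only [gg, pow_succ]
    ring

lemma G_eq (G : PowerSeries ℚ) (hG : G ^ 2 = G + PowerSeries.X)
    (hG1 : PowerSeries.constantCoeff G = 1) : G = Gc := by
  have h0 : (G - Gc) * (G + Gc - 1) = 0 := by linear_combination hG - hGc_sq
  rcases mul_eq_zero.mp h0 with h | h
  · exact sub_eq_zero.mp h
  · exfalso
    have h2 := congrArg (constantCoeff) h
    simp only [map_sub, map_add, map_one, hG1] at h2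
    have : constantCoeff Gc = 1 := by
      simp [Gc, gg]
    rw [this] at h2
    norm_num at h2

lemma coeff_G (G : PowerSeries ℚ) (hG : G ^ 2 = G + PowerSeries.X)
    (hG1 : PowerSeries.constantCoeff G = 1) (k : ℕ) :
    coeff (k+1) G = (-1) ^ k * (catalan k : ℚ) := by
  rw [G_eq G hG hG1]
  simp [Gc, coeff_mk]
  rfl

noncomputable def FF (n : ℤ) : ℕ → ℚ
  | 0 => 1
  | (k+1) => bb (n - k - 1) (k + 1) + bb (n - k - 2) k

lemma FF_rec (m : ℤ) (k : ℕ) : FF (m+2) (k+1) = FF (m+1) (k+1) + FF m k := by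
  cases k with
  | zero =>
    show bb (m + 2 - (0:ℕ) - 1) 1 + bb (m + 2 - (0:ℕ) - 2) 0
        = (bb (m + 1 - (0:ℕ) - 1) 1 + bb (m + 1 - (0:ℕ) - 2) 0) + 1
    rw [show (m + 2 - (0:ℕ) - 1 : ℤ) = (m + 1 - (0:ℕ) - 1) + 1 by push_cast; ring,
      bb_pascal, bb_zero, bb_zero]
    rw [bb_zero]
    ring
  | succ j =>
    show bb (m + 2 - (j+1:ℕ) - 1) (j+2) + bb (m + 2 - (j+1:ℕ) - 2) (j+1)
        = (bb (m + 1 - (j+1:ℕ) - 1) (j+2) + bb (m + 1 - (j+1:ℕ) - 2) (j+1))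
          + (bb (m - (j:ℕ) - 1) (j+1) + bb (m - (j:ℕ) - 2) j)
    have e1 : (m + 2 - (j+1:ℕ) - 1 : ℤ) = (m - (j:ℕ) - 1) + 1 := by push_cast; ring
    have e2 : (m + 2 - (j+1:ℕ) - 2 : ℤ) = (m - (j:ℕ) - 2) + 1 := by push_cast; ring
    have e3 : (m + 1 - (j+1:ℕ) - 1 : ℤ) = m - (j:ℕ) - 1 := by push_cast; ring
    have e4 : (m + 1 - (j+1:ℕ) - 2 : ℤ) = m - (j:ℕ) - 2 := by push_cast; ring
    rw [e1, e2, e3, e4, bb_pascal, bb_pascal]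
    ring

lemma FF_zero (k : ℕ) : FF ((0:ℕ) : ℤ) (k+1) = 0 := by
  show bb ((0:ℕ) - (k:ℕ) - 1) (k+1) + bb ((0:ℕ) - (k:ℕ) - 2) k = 0
  rw [show (((0:ℕ):ℤ) - (k:ℕ) - 1) = -(k:ℤ) - 1 by push_cast; ring,
    show (((0:ℕ):ℤ) - (k:ℕ) - 2) = -((k+1:ℕ):ℤ) - 1 by push_cast; ring,
    bb_neg, bb_neg]
  have hsymm : (k + (k+1)).choose (k+1) = ((k+1) + k).choose k := by
    rw [show k + (k+1) = 2*k+1 by ring, show (k+1) + k = 2*k+1 by ring]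
    rw [← Nat.choose_symm (by omega : k + 1 ≤ 2*k+1)]
    congr 1
    omega
  rw [hsymm, pow_succ]
  ring

lemma cat_diff (k : ℕ) : (catalan k : ℚ) = ((2*k).choose k : ℚ) - ((2*k).choose (k+1) : ℚ) := by
  have h1 : ((k:ℚ)+1) * (catalan k : ℚ) = ((2*k).choose k : ℚ) := by
    have := congrArg (Nat.cast (R := ℚ)) (succ_mul_catalan_eq_centralBinom k)
    rw [Nat.centralBinom_eq_two_mul_choose] at this
    push_cast at this
    linarith
  have h2 : ((2*k).choose (k+1) : ℚ) * ((k:ℚ)+1) = ((2*k).choose k : ℚ) * (k:ℚ) := by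
    have := congrArg (Nat.cast (R := ℚ)) (Nat.choose_succ_right_eq (2*k) k)
    rw [show 2*k - k = k by omega] at this
    push_cast at this
    linarith
  have hk1 : ((k:ℚ)+1) ≠ 0 := by positivity
  have goal' : ((k:ℚ)+1) * (catalan k : ℚ)
      = ((k:ℚ)+1) * (((2*k).choose k : ℚ) - ((2*k).choose (k+1) : ℚ)) := by
    linear_combination h1 + h2
  exact mul_left_cancel₀ hk1 goal'

lemma FF_one (G : PowerSeries ℚ) (hG : G ^ 2 = G + PowerSeries.X)
    (hG1 : PowerSeries.constantCoeff G = 1) (k : ℕ) :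
    PowerSeries.coeff (k+1) (G ^ 1) = FF ((1:ℕ) : ℤ) (k+1) := by
  rw [pow_one, coeff_G G hG hG1 k]
  show _ = bb ((1:ℕ) - (k:ℕ) - 1) (k+1) + bb ((1:ℕ) - (k:ℕ) - 2) k
  cases k with
  | zero =>
    rw [show (((1:ℕ):ℤ) - ((0:ℕ):ℤ) - 1) = ((0:ℕ):ℤ) by norm_num,
      show (((1:ℕ):ℤ) - ((0:ℕ):ℤ) - 2) = -((0:ℕ):ℤ) - 1 by norm_num,
      bb_natCast, bb_neg]
    simp [catalan_zero]
  | succ j =>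
    rw [show (((1:ℕ):ℤ) - ((j+1:ℕ):ℤ) - 1) = -((j:ℕ):ℤ) - 1 by push_cast; ring,
      show (((1:ℕ):ℤ) - ((j+1:ℕ):ℤ) - 2) = -((j+1:ℕ):ℤ) - 1 by push_cast; ring,
      bb_neg, bb_neg]
    rw [cat_diff (j+1)]
    rw [show j + (j+1+1) = 2*(j+1) by ring, show j+1+(j+1) = 2*(j+1) by ring,
      show (2*(j+1)).choose (j+1+1) = (2*(j+1)).choose (j+2) from rfl]
    push_cast [pow_succ]
    ring

lemma main_lemma (G : PowerSeries ℚ) (hG : G ^ 2 = G + PowerSeries.X)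
    (hG1 : PowerSeries.constantCoeff G = 1) :
    ∀ (k n : ℕ), PowerSeries.coeff k (G ^ n) = FF (n : ℤ) k := by
  intro k
  induction k with
  | zero =>
    intro n
    rw [PowerSeries.coeff_zero_eq_constantCoeff, map_pow, hG1, one_pow]
    rfl
  | succ k IHk =>
    intro n
    induction n using Nat.strong_induction_on with
    | _ n IHn =>
      match n with
      | 0 => rw [pow_zero, PowerSeries.coeff_one, FF_zero]; simp
      | 1 => exact FF_one G hG hG1 k
      | (m+2) =>
        have hpow : G ^ (m + 2) = G ^ (m + 1) + PowerSeries.X * G ^ m := by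
          have h2 : G ^ (m+2) = G ^ m * G ^ 2 := by ring
          rw [h2, hG]
          ring
        rw [hpow, map_add, PowerSeries.coeff_succ_X_mul, IHn (m+1) (by omega), IHk m]
        have := FF_rec ((m:ℕ) : ℤ) k
        rw [show (((m+2:ℕ)):ℤ) = ((m:ℕ):ℤ) + 2 by push_cast; ring,
          show (((m+1:ℕ)):ℤ) = ((m:ℕ):ℤ) + 1 by push_cast; ring, this]

/-- For `G` the power series with `G² = G + X` and constant term `1`, every positive `d`
and every `k ≥ 0`, the coefficient of `X^k` in `G^(2(d+k))` is `C(k+2d−1,2d−1)·(d+k)/d`. -/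
theorem stmt_2 (G : PowerSeries ℚ) (hG : G ^ 2 = G + PowerSeries.X)
    (hG1 : PowerSeries.constantCoeff G = 1) (d : ℕ) (hd : 0 < d) (k : ℕ) :
    PowerSeries.coeff k (G ^ (2 * (d + k))) =
      ((k + 2 * d - 1).choose (2 * d - 1) : ℚ) * (d + k) / d := by
  have hd' : (d:ℚ) ≠ 0 := Nat.cast_ne_zero.mpr hd.ne'
  cases k with
  | zero =>
    rw [main_lemma G hG hG1 0 (2*(d+0))]
    show (1:ℚ) = _
    rw [show 0 + 2*d - 1 = 2*d-1 by omega, Nat.choose_self]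
    push_cast
    field_simp
    simp
  | succ j =>
    rw [main_lemma G hG hG1 (j+1) (2*(d+(j+1)))]
    show bb (((2*(d+(j+1)):ℕ):ℤ) - (j:ℕ) - 1) (j+1) + bb (((2*(d+(j+1)):ℕ):ℤ) - (j:ℕ) - 2) j = _
    rw [show (((2*(d+(j+1)):ℕ)):ℤ) - (j:ℕ) - 1 = ((2*d+j+1 : ℕ) : ℤ) by push_cast; ring,
        show (((2*(d+(j+1)):ℕ)):ℤ) - (j:ℕ) - 2 = ((2*d+j : ℕ) : ℤ) by push_cast; ring,
        bb_natCast, bb_natCast]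
    have key : 2*d * ((2*d+j).choose j) = ((2*d+j).choose (j+1)) * (j+1) := by
      rw [Nat.choose_succ_right_eq, show 2*d+j-j = 2*d by omega]
      ring
    have pasc : (2*d+j+1).choose (j+1) = (2*d+j).choose j + (2*d+j).choose (j+1) :=
      Nat.choose_succ_succ (2*d+j) j
    have hsym : (j+1+2*d-1).choose (2*d-1) = (2*d+j).choose (j+1) := by
      rw [show j+1+2*d-1 = 2*d+j by omega,
        ← Nat.choose_symm (show 2*d-1 ≤ 2*d+j by omega)]
      congr 1
      omega
    rw [pasc, hsym, eq_div_iff hd']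
    have keyq : (2*d : ℚ) * ((2*d+j).choose j : ℚ) = ((2*d+j).choose (j+1) : ℚ) * ((j:ℚ)+1) := by
      exact_mod_cast congrArg (Nat.cast (R := ℚ)) key
    push_cast
    linear_combination keyq
end

section
/- Let G(X) be the formal power series with G(X)^2 = G(X) + X and constant term 1. For every integer k ≥ 1, the coefficient of X^k in G(X)^{2k} equals 2. -/
open PowerSeries

private lemma dpow' (G : PowerSeries ℚ) (n : ℕ) :
    d⁄dX ℚ (G ^ (n+1)) = ((n : ℚ⟦X⟧)+1) * G ^ n * d⁄dX ℚ G := by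
  induction n with
  | zero => simp
  | succ m ih =>
    rw [pow_succ, Derivation.leibniz, ih, smul_eq_mul, smul_eq_mul]
    push_cast
    ring

/-- For `G` the power series with `G² = G + X` and constant term `1`, for every `k ≥ 1`
the coefficient of `X^k` in `G^(2k)` equals `2`. -/
theorem stmt_3 (G : PowerSeries ℚ) (hG : G ^ 2 = G + PowerSeries.X)
    (hG1 : PowerSeries.constantCoeff G = 1) (k : ℕ) (hk : 1 ≤ k) :
    PowerSeries.coeff k (G ^ (2 * k)) = 2 := by
  set DG := d⁄dX ℚ G with hDGdef
  have hDG : 2*G*DG = DG + 1 := by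
    have h := congrArg (d⁄dX ℚ) hG
    rw [map_add, derivative_X] at h
    have h2 := dpow' G 1
    linear_combination h - h2
  have hg1 : coeff 1 G = 1 := by
    have h := congrArg (coeff 1) hG
    rw [map_add, coeff_one_X, sq, coeff_mul, Finset.Nat.antidiagonal_succ,
      Finset.sum_cons] at h
    simp [coeff_zero_eq_constantCoeff, hG1] at h
    linarith
  obtain ⟨j, rfl⟩ : ∃ j, k = j + 1 := ⟨k-1, by omega⟩
  clear hk
  induction j with
  | zero =>
    have h : coeff 1 (G^2) = 2 := by
      rw [hG, map_add, coeff_one_X, hg1]; norm_num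
    simpa using h
  | succ m ih =>
    have h1 := dpow' G (2*m+1)
    have h2 := dpow' G (2*m+2)
    push_cast at h1 h2
    have F : C ((2*m+2 : ℕ) : ℚ) * d⁄dX ℚ (G^(2*m+3)) +
        C ((2*(2*m+3) : ℕ) : ℚ) * (X * d⁄dX ℚ (G^(2*m+2))) =
        C (((2*m+3)*(2*m+2) : ℕ) : ℚ) * G^(2*m+2) := by
      simp only [map_natCast]
      push_cast
      linear_combination (2*(m:ℚ⟦X⟧)+2) * h2 + (2*(2*(m:ℚ⟦X⟧)+3))*X*h1
        - 2*(2*(m:ℚ⟦X⟧)+2)*(2*(m:ℚ⟦X⟧)+3)*G^(2*m+1)*DG*hG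
        + (2*(m:ℚ⟦X⟧)+2)*(2*(m:ℚ⟦X⟧)+3)*G^(2*m+2)*hDG
    have hc := congrArg (coeff (m+1)) F
    rw [map_add, coeff_C_mul, coeff_C_mul, coeff_C_mul, coeff_succ_X_mul,
      coeff_derivative, coeff_derivative] at hc
    push_cast at hc
    have hT0 : coeff (m+2) (G^(2*m+3)) = 0 := by
      have hc2 : ((2*(m:ℚ)+2)*((m:ℚ)+2)) * coeff (m+2) (G^(2*m+3)) = 0 := by
        linear_combination hc
      have hne : ((2*(m:ℚ)+2)*((m:ℚ)+2)) ≠ 0 := by positivity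
      exact (mul_eq_zero.mp hc2).resolve_left hne
    have hmul : G^(2*m+4) = G^(2*m+3) + X * G^(2*m+2) := by
      linear_combination G^(2*m+2) * hG
    have hfin := congrArg (coeff (m+2)) hmul
    rw [map_add, coeff_succ_X_mul] at hfin
    have ih' : coeff (m+1) (G^(2*m+2)) = 2 := by
      rw [show 2*m+2 = 2*(m+1) by ring]; exact ih
    show coeff (m+2) (G^(2*(m+1+1))) = 2
    rw [show 2*(m+1+1) = 2*m+4 by ring, hfin, hT0, ih', zero_add]
end

section
/- Define the exponential generating function F(X,Y) = exp(Σ_{κ≥1} ((−1)^{κ+1}/κ)·C(2κ−1,κ)·X^κ·Y) as a formal power series in X with polynomial coefficients in Y. Then F(X,Y) = ((1+√(1+4X))/2)^Y in the sense that for each fixed nonnegative integer value of Y = m, F(X,m) = G(X)^m where G(X) = (1+√(1+4X))/2. -/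
open scoped Nat
open PowerSeries Finset

/-- The formal exponential of a power series `B` with zero constant term: the coefficient
of `Xⁿ` in `exp B = Σ_j B^j/j!` only involves `j ≤ n` since `ord B^j ≥ j`. -/
noncomputable def formalExp (B : PowerSeries ℚ) : PowerSeries ℚ :=
  PowerSeries.mk fun n =>
    ∑ j ∈ Finset.range (n + 1), PowerSeries.coeff (R := ℚ) n (B ^ j) / (j ! : ℚ)


lemma coeff_pow_zero {B : ℚ⟦X⟧} (hB : constantCoeff (R := ℚ) B = 0) {n j : ℕ} (h : n < j) :
    coeff (R := ℚ) n (B ^ j) = 0 := by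
  have hd : (X : ℚ⟦X⟧) ^ j ∣ B ^ j := pow_dvd_pow_of_dvd (X_dvd_iff.mpr hB) j
  exact X_pow_dvd_iff.mp hd n h

noncomputable def truncE (N : ℕ) (B : ℚ⟦X⟧) : ℚ⟦X⟧ :=
  ∑ j ∈ Finset.range N, ((j ! : ℚ))⁻¹ • B ^ j

lemma coeff_formalExp_stable {B : ℚ⟦X⟧} (hB : constantCoeff (R := ℚ) B = 0) {n N : ℕ} (h : n < N) :
    coeff (R := ℚ) n (formalExp B) = coeff (R := ℚ) n (truncE N B) := by
  rw [formalExp, coeff_mk, truncE, map_sum]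
  simp only [coeff_smul, smul_eq_mul, div_eq_inv_mul]
  apply Finset.sum_subset (Finset.range_subset_range.mpr h)
  intro j _ hj
  rw [Finset.mem_range, not_lt] at hj
  rw [coeff_pow_zero hB (Nat.lt_of_succ_le hj), mul_zero]

lemma coeff_mul_congr_right {h f g : ℚ⟦X⟧} {n : ℕ}
    (hfg : ∀ q ≤ n, coeff (R := ℚ) q f = coeff (R := ℚ) q g) :
    coeff (R := ℚ) n (h * f) = coeff (R := ℚ) n (h * g) := by
  rw [coeff_mul, coeff_mul]
  refine Finset.sum_congr rfl fun p hp => ?_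
  replace hp := Finset.HasAntidiagonal.mem_antidiagonal.mp hp
  rw [hfg p.2 (by omega)]

lemma derivative_truncE (B : ℚ⟦X⟧) (N : ℕ) :
    d⁄dX ℚ (truncE (N + 1) B) = d⁄dX ℚ B * truncE N B := by
  rw [truncE, map_sum, Finset.sum_range_succ']
  have h0 : d⁄dX ℚ (((0)! : ℚ)⁻¹ • B ^ 0) = 0 := by simp
  rw [h0, add_zero, truncE, Finset.mul_sum]
  refine Finset.sum_congr rfl fun i _ => ?_
  rw [Derivation.map_smul, Derivation.leibniz_pow, Nat.succ_sub_one]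
  simp only [smul_eq_mul, nsmul_eq_mul, smul_eq_C_mul]
  have hfac : ((i + 1)! : ℚ)⁻¹ * ((i : ℚ) + 1) = ((i)! : ℚ)⁻¹ := by
    rw [Nat.factorial_succ]
    push_cast
    rw [mul_inv]
    field_simp
  have hC : PowerSeries.C (R := ℚ) (((i + 1)! : ℚ))⁻¹ * (((i + 1) : ℕ) : ℚ⟦X⟧)
      = PowerSeries.C (R := ℚ) (((i)! : ℚ))⁻¹ := by
    rw [show (((i + 1) : ℕ) : ℚ⟦X⟧) = PowerSeries.C (R := ℚ) (((i + 1) : ℕ) : ℚ) from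
      (map_natCast (PowerSeries.C (R := ℚ)) _).symm, ← map_mul]
    congr 1
    push_cast
    exact hfac
  linear_combination (B ^ i * d⁄dX ℚ B) * hC

lemma derivative_formalExp {B : ℚ⟦X⟧} (hB : constantCoeff (R := ℚ) B = 0) :
    d⁄dX ℚ (formalExp B) = d⁄dX ℚ B * formalExp B := by
  ext n
  rw [coeff_derivative, coeff_formalExp_stable hB (Nat.lt_succ_self (n + 1)), ← coeff_derivative,
      derivative_truncE]
  exact coeff_mul_congr_right fun q hq =>
    (coeff_formalExp_stable hB (Nat.lt_succ_of_le hq)).symm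

lemma constantCoeff_formalExp (B : ℚ⟦X⟧) : constantCoeff (R := ℚ) (formalExp B) = 1 := by
  rw [← coeff_zero_eq_constantCoeff_apply, formalExp, coeff_mk]
  simp

lemma ode_unique {c f g : ℚ⟦X⟧} (hf : d⁄dX ℚ f = c * f) (hg : d⁄dX ℚ g = c * g)
    (h0 : constantCoeff (R := ℚ) f = constantCoeff (R := ℚ) g) : f = g := by
  ext n
  induction n using Nat.strong_induction_on with
  | _ n ih =>
    match n with
    | 0 => simpa using h0
    | n + 1 =>
      have h1 : coeff (R := ℚ) n (c * f) = coeff (R := ℚ) n (c * g) :=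
        coeff_mul_congr_right fun q hq => ih q (Nat.lt_succ_of_le hq)
      rw [← hf, ← hg, coeff_derivative, coeff_derivative] at h1
      exact mul_right_cancel₀ (by positivity) h1

noncomputable def Dser : ℚ⟦X⟧ := PowerSeries.mk fun n => (-1) ^ n * (n.centralBinom : ℚ)

lemma two_eq : (2 : ℚ⟦X⟧) = PowerSeries.C (R := ℚ) 2 := (map_ofNat (PowerSeries.C (R := ℚ)) 2).symm
lemma four_eq : (4 : ℚ⟦X⟧) = PowerSeries.C (R := ℚ) 4 := (map_ofNat (PowerSeries.C (R := ℚ)) 4).symm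

lemma Dser_const : constantCoeff (R := ℚ) Dser = 1 := by
  rw [← coeff_zero_eq_constantCoeff_apply, Dser, coeff_mk]
  simp [Nat.centralBinom]

lemma hD2 : d⁄dX ℚ Dser * (1 + 4 * X) + 2 * Dser = 0 := by
  have hre : d⁄dX ℚ Dser * (1 + 4 * X) + 2 * Dser
      = d⁄dX ℚ Dser + PowerSeries.C (R := ℚ) 4 * (d⁄dX ℚ Dser * X) + PowerSeries.C (R := ℚ) 2 * Dser := by
    rw [← two_eq, ← four_eq]; ring
  rw [hre]
  ext n
  cases n with
  | zero =>
    simp only [map_add, coeff_C_mul, coeff_zero_mul_X, mul_zero, coeff_derivative, Dser,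
      coeff_mk, map_zero, add_zero]
    norm_num [Nat.centralBinom]
  | succ n =>
    have key := Nat.succ_mul_centralBinom_succ (n + 1)
    have keyQ : ((n : ℚ) + 2) * ((n + 2).centralBinom : ℚ)
        = 2 * (2 * ((n : ℚ) + 1) + 1) * ((n + 1).centralBinom : ℚ) := by
      have : ((n + 2) * (n + 2).centralBinom : ℚ) = (2 * (2 * (n + 1) + 1) * (n + 1).centralBinom : ℚ) := by
        exact_mod_cast congrArg (Nat.cast : ℕ → ℚ) key
      push_cast at this ⊢
      linarith [this]
    simp only [map_add, coeff_C_mul, coeff_derivative, coeff_succ_mul_X, Dser, coeff_mk,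
      map_zero]
    push_cast
    linear_combination ((-1 : ℚ)) ^ n * keyQ

lemma Dsq : (1 + 4 * X : ℚ⟦X⟧) * Dser ^ 2 = 1 := by
  apply derivative.ext
  · have h4 : d⁄dX ℚ (1 + 4 * X : ℚ⟦X⟧) = 4 := by
      rw [map_add, Derivation.map_one_eq_zero, zero_add, four_eq, Derivation.leibniz,
        derivative_X, derivative_C, smul_eq_mul, smul_eq_mul, mul_one, mul_zero, add_zero]
    rw [Derivation.leibniz, Derivation.leibniz_pow, h4, Derivation.map_one_eq_zero]
    simp only [smul_eq_mul, nsmul_eq_mul, pow_one, Nat.cast_ofNat]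
    linear_combination (2 * Dser) * hD2
  · simp only [map_mul, map_add, map_pow, map_one, Dser_const, constantCoeff_X]
    norm_num

lemma cb_eq (n : ℕ) : (n + 1).centralBinom = 2 * ((2 * n + 1).choose (n + 1)) := by
  have hsymm : (2 * n + 1).choose n = (2 * n + 1).choose (n + 1) := by
    have h := Nat.choose_symm (n := 2 * n + 1) (k := n + 1) (by omega)
    simpa [show 2 * n + 1 - (n + 1) = n by omega] using h
  rw [Nat.centralBinom, show 2 * (n + 1) = (2 * n + 1) + 1 by ring, Nat.choose_succ_succ]
  simp only [Nat.succ_eq_add_one] at hsymm ⊢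
  omega

noncomputable def Aser : ℚ⟦X⟧ := PowerSeries.mk fun κ : ℕ =>
  if κ = 0 then (0 : ℚ) else (-1) ^ (κ + 1) / κ * ((2 * κ - 1).choose κ : ℚ)

lemma hdA : 2 * (d⁄dX ℚ Aser * X) = 1 - Dser := by
  ext n
  cases n with
  | zero =>
    simp only [two_eq, coeff_C_mul, coeff_zero_mul_X, mul_zero, map_sub, Dser, coeff_mk,
      PowerSeries.coeff_one, if_pos rfl]
    norm_num [Nat.centralBinom]
  | succ n =>
    rw [two_eq]
    simp only [coeff_C_mul, coeff_succ_mul_X, coeff_derivative, map_sub, Dser, Aser, coeff_mk]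
    rw [if_neg (Nat.succ_ne_zero n), show 2 * (n + 1) - 1 = 2 * n + 1 by omega,
      PowerSeries.coeff_one, if_neg (Nat.succ_ne_zero n)]
    have hcb : (((n + 1).centralBinom : ℚ)) = 2 * ((2 * n + 1).choose (n + 1) : ℚ) := by
      exact_mod_cast congrArg (Nat.cast : ℕ → ℚ) (cb_eq n)
    rw [hcb]
    have hne : ((n : ℚ) + 1) ≠ 0 := by positivity
    push_cast
    field_simp
    ring

/-- With `G = (1+√(1+4X))/2` and `A = Σ_{κ≥1}((−1)^{κ+1}/κ)C(2κ−1,κ)X^κ = log G`, one has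
`F(X,m) := exp(m·A) = G^m` for every nonnegative integer `m`. -/
theorem stmt_16 (S G A : PowerSeries ℚ) (hS : S ^ 2 = 1 + 4 * PowerSeries.X)
    (hS1 : PowerSeries.constantCoeff (R := ℚ) S = 1)
    (hG : G = PowerSeries.C (R := ℚ) (1 / 2) * (1 + S))
    (hA : A = PowerSeries.mk fun κ : ℕ =>
        if κ = 0 then (0 : ℚ) else (-1) ^ (κ + 1) / κ * ((2 * κ - 1).choose κ : ℚ)) :
    ∀ m : ℕ, formalExp ((m : ℚ) • A) = G ^ m := by
  have hAser : A = Aser := hA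
  have hC2 : (2 : ℚ⟦X⟧) * PowerSeries.C (R := ℚ) (1 / 2) = 1 := by
    rw [two_eq, ← map_mul]; norm_num
  have hG2 : 2 * G = 1 + S := by rw [hG, ← mul_assoc, hC2, one_mul]
  have hGc : constantCoeff (R := ℚ) G = 1 := by
    have h := congrArg (constantCoeff (R := ℚ)) hG2
    simp only [map_mul, map_add, map_one, hS1, map_ofNat] at h
    linarith
  have h4ne : (4 : ℚ⟦X⟧) ≠ 0 := by
    intro h
    have h0 := congrArg (constantCoeff (R := ℚ)) h
    simp only [map_ofNat, map_zero] at h0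
    norm_num at h0
  have hGsq : G ^ 2 = G + X := by
    have h : (4 : ℚ⟦X⟧) * G ^ 2 = 4 * (G + X) := by
      linear_combination (2 * G + S - 1) * hG2 + hS
    exact mul_left_cancel₀ h4ne h
  have hSD : S * Dser = 1 := by
    have h2 : (S * Dser) ^ 2 = 1 := by rw [mul_pow, hS, Dsq]
    have h3 : (S * Dser - 1) * (S * Dser + 1) = 0 := by linear_combination h2
    rcases mul_eq_zero.mp h3 with h | h
    · exact sub_eq_zero.mp h
    · exfalso
      have h0 := congrArg (constantCoeff (R := ℚ)) h
      simp only [map_add, map_mul, map_one, hS1, Dser_const, map_zero] at h0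
      norm_num at h0
  have hdGS : d⁄dX ℚ G * S = 1 := by
    have h : (2 : ℚ⟦X⟧) * (G * d⁄dX ℚ G) = d⁄dX ℚ G + 1 := by
      have h0 := congrArg (d⁄dX ℚ) hGsq
      rw [Derivation.leibniz_pow, map_add, derivative_X] at h0
      simpa [smul_eq_mul, nsmul_eq_mul] using h0
    linear_combination h - d⁄dX ℚ G * hG2
  have hdGD : d⁄dX ℚ G = Dser := by
    calc d⁄dX ℚ G = d⁄dX ℚ G * (S * Dser) := by rw [hSD, mul_one]
    _ = d⁄dX ℚ G * S * Dser := by ring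
    _ = Dser := by rw [hdGS, one_mul]
  have hSG : S * G = G + 2 * X := by linear_combination (-G) * hG2 + 2 * hGsq
  have hDG : Dser * G = G - 2 * X * Dser := by
    linear_combination (-Dser) * hSG + G * hSD
  have h2ne : (2 : ℚ⟦X⟧) ≠ 0 := by
    intro h
    have h0 := congrArg (constantCoeff (R := ℚ)) h
    simp only [map_ofNat, map_zero] at h0
    norm_num at h0
  have h2Xne : (2 * X : ℚ⟦X⟧) ≠ 0 := mul_ne_zero h2ne X_ne_zero
  have hAG : d⁄dX ℚ A * G = Dser := by
    apply mul_left_cancel₀ h2Xne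
    rw [hAser]
    linear_combination G * hdA - hDG
  have hdG' : d⁄dX ℚ G = d⁄dX ℚ A * G := by rw [hdGD, ← hAG]
  have hGm : ∀ m : ℕ, d⁄dX ℚ (G ^ m) = ((m : ℚ⟦X⟧) * d⁄dX ℚ A) * G ^ m := by
    intro m
    rw [Derivation.leibniz_pow]
    cases m with
    | zero => simp
    | succ k =>
      simp only [smul_eq_mul, nsmul_eq_mul, Nat.succ_sub_one]
      rw [hdG', pow_succ]
      ring
  have hA0 : constantCoeff (R := ℚ) A = 0 := by
    rw [hA, ← coeff_zero_eq_constantCoeff_apply, coeff_mk]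
    simp
  intro m
  have hmA0 : constantCoeff (R := ℚ) ((m : ℚ) • A) = 0 := by
    rw [← coeff_zero_eq_constantCoeff_apply, coeff_smul,
      coeff_zero_eq_constantCoeff_apply, hA0, smul_zero]
  apply ode_unique (c := (m : ℚ⟦X⟧) * d⁄dX ℚ A)
  · rw [derivative_formalExp hmA0]
    congr 1
    rw [Derivation.map_smul, smul_eq_C_mul, map_natCast]
  · exact hGm m
  · rw [constantCoeff_formalExp, map_pow, hGc, one_pow]
end
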